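/- arXiv:1802.00286 — 6 statements merged into one kernel-verified Lean document; each statement's English description precedes it below -/
import Mathlib

section
/- Let A ⊆ D ⊆ ℂ be arbitrary sets and G ⊆ D ∖ A. Suppose that M is a continuous movement, t ∈ [0,1], and M_s⁻¹(x) ∈ D for every s ∈ [0,t] and every x ∈ G. If G and M_t⁻¹(G) are subsets of distinct connected components of D ∖ A, then G ⊆ W_M(A). -/
open MeasureTheory Set Filter

noncomputable section

/-- A rigid motion of the plane `ℂ`: a map `x ↦ u·x + c` with `|u| = 1`. -/
def IsRigidMotion (f : ℂ → ℂ) : Prop :=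
  ∃ u c : ℂ, ‖u‖ = 1 ∧ f = fun x => u * x + c

/-- A continuous movement: `M t` is a rigid motion for each `t ∈ [0,1]`,
`(t,x) ↦ M t x` is continuous on `[0,1] × ℂ`, and `M 0 = id`. -/
def IsContMovement (M : ℝ → ℂ → ℂ) : Prop :=
  (∀ t ∈ Set.Icc (0:ℝ) 1, IsRigidMotion (M t)) ∧
  ContinuousOn (fun p : ℝ × ℂ => M p.1 p.2) (Set.Icc (0:ℝ) 1 ×ˢ Set.univ) ∧
  M 0 = id

/-- `sweep M A = W_M(A)`, the set of points touched by the moving set `A`. -/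
def sweep (M : ℝ → ℂ → ℂ) (A : Set ℂ) : Set ℂ :=
  {y | ∃ t ∈ Set.Icc (0:ℝ) 1, ∃ x ∈ A, M t x = y}

/-- Property (K). -/
def HasPropK (A : Set ℂ) : Prop :=
  ∃ α : ℂ → ℂ, IsRigidMotion α ∧ α ≠ id ∧
    ∀ ε : ℝ, 0 < ε → ∃ M : ℝ → ℂ → ℂ, IsContMovement M ∧ M 1 = α ∧
      MeasureTheory.volume (sweep M A) < ENNReal.ofReal ε

/-- Property (Kˢ). -/
def HasPropKs (A : Set ℂ) : Prop :=
  ∀ α : ℂ → ℂ, IsRigidMotion α →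
    ∀ ε : ℝ, 0 < ε → ∃ M : ℝ → ℂ → ℂ, IsContMovement M ∧ M 1 = α ∧
      MeasureTheory.volume (sweep M A) < ENNReal.ofReal ε

/-- A trivial (K)-set: covered by a null set which is a union of parallel
lines or a union of concentric circles. -/
def IsTrivialKSet (A : Set ℂ) : Prop :=
  ∃ N : Set ℂ, MeasureTheory.volume N = 0 ∧ A ⊆ N ∧
    ((∃ v : ℂ, v ≠ 0 ∧ ∀ x ∈ N, ∀ t : ℝ, x + t * v ∈ N) ∨
     (∃ c : ℂ, ∀ x ∈ N, ∀ y : ℂ, ‖y - c‖ = ‖x - c‖ → y ∈ N))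

/-- The rotation `R_{c,φ}` about `c` by angle `φ`. -/
def rot (c : ℂ) (φ : ℝ) : ℂ → ℂ := fun x => Complex.exp (φ * Complex.I) * (x - c) + c

/-- `E` is the elementary movement `E^α` determined by the rigid motion `α`. -/
def IsElemMovement (α : ℂ → ℂ) (E : ℝ → ℂ → ℂ) : Prop :=
  (∃ c : ℂ, α = (fun x => x + c) ∧ ∀ t : ℝ, E t = fun x => x + (t : ℂ) * c) ∨
  (∃ (a : ℂ) (φ : ℝ), |φ| < Real.pi ∧ α = rot a φ ∧ ∀ t : ℝ, E t = rot a (t * φ))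

/-- The norm `‖f‖ = |u| + |v|` of an affine map `f x = u·x + v`. -/
def Lnorm (f : ℂ → ℂ) : ℝ := ‖f 1 - f 0‖ + ‖f 0‖

/-- Lemma 5: if `G ⊆ D \ A`, `M` is a continuous movement with
`M s ⁻¹ (x) ∈ D` for all `s ∈ [0,t]`, `x ∈ G`, and `G` and `M t ⁻¹ (G)` lie
in distinct connected components of `D \ A`, then `G ⊆ W_M(A)`. -/
theorem stmt_5 (A D G : Set ℂ) (hAD : A ⊆ D) (hG : G ⊆ D \ A)
    (M : ℝ → ℂ → ℂ) (hM : IsContMovement M) (t : ℝ) (ht : t ∈ Set.Icc (0:ℝ) 1)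
    (N : ℝ → ℂ → ℂ)
    (hN : ∀ s : ℝ, Function.LeftInverse (N s) (M s) ∧ Function.RightInverse (N s) (M s))
    (hD : ∀ s ∈ Set.Icc 0 t, ∀ x ∈ G, N s x ∈ D)
    (y z : ℂ) (hy : y ∈ D \ A) (hz : z ∈ D \ A)
    (hGy : G ⊆ connectedComponentIn (D \ A) y)
    (hGz : N t '' G ⊆ connectedComponentIn (D \ A) z)
    (hne : connectedComponentIn (D \ A) y ≠ connectedComponentIn (D \ A) z) :
    G ⊆ sweep M A := by
  intro x hx
  by_contra hxs
  obtain ⟨hrig, hcont, hM0⟩ := hM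
  -- explicit formula for N s x on [0,1]
  have key : ∀ s ∈ Set.Icc (0:ℝ) 1, N s x = (x - M s 0) / (M s 1 - M s 0) := by
    intro s hs
    obtain ⟨u, c, hu, hMs⟩ := hrig s hs
    have h1 : M s (N s x) = x := (hN s).2 x
    have hu0 : u ≠ 0 := by
      intro h; rw [h] at hu; simp at hu
    rw [hMs] at h1 ⊢
    simp only at h1 ⊢
    have hden : (u * 1 + c) - (u * 0 + c) = u := by ring
    rw [hden, eq_div_iff hu0]
    linear_combination h1
  -- continuity of s ↦ N s x on [0,1]
  have hc0 : ContinuousOn (fun s : ℝ => M s 0) (Set.Icc (0:ℝ) 1) := by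
    have h : Continuous fun s : ℝ => (s, (0:ℂ)) := by continuity
    exact hcont.comp h.continuousOn (fun s hs => ⟨hs, Set.mem_univ _⟩)
  have hc1 : ContinuousOn (fun s : ℝ => M s 1) (Set.Icc (0:ℝ) 1) := by
    have h : Continuous fun s : ℝ => (s, (1:ℂ)) := by continuity
    exact hcont.comp h.continuousOn (fun s hs => ⟨hs, Set.mem_univ _⟩)
  have hden_ne : ∀ s ∈ Set.Icc (0:ℝ) 1, M s 1 - M s 0 ≠ 0 := by
    intro s hs
    obtain ⟨u, c, hu, hMs⟩ := hrig s hs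
    rw [hMs]
    simp only
    have : (u * 1 + c) - (u * 0 + c) = u := by ring
    rw [this]
    intro h; rw [h] at hu; simp at hu
  have hf : ContinuousOn (fun s => N s x) (Set.Icc (0:ℝ) 1) := by
    apply ContinuousOn.congr (f := fun s => (x - M s 0) / (M s 1 - M s 0))
    · exact (continuousOn_const.sub hc0).div (hc1.sub hc0) hden_ne
    · exact key
  have hsub : Set.Icc (0:ℝ) t ⊆ Set.Icc (0:ℝ) 1 := Set.Icc_subset_Icc le_rfl ht.2
  -- path stays in D \ A
  have hfDA : ∀ s ∈ Set.Icc (0:ℝ) t, N s x ∈ D \ A := by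
    intro s hs
    refine ⟨hD s hs x hx, fun hA => hxs ⟨s, hsub hs, N s x, hA, (hN s).2 x⟩⟩
  have hS : IsPreconnected ((fun s => N s x) '' Set.Icc (0:ℝ) t) :=
    isPreconnected_Icc.image _ (hf.mono hsub)
  have hN0 : N 0 x = x := by
    have h0 : M 0 x = x := by rw [hM0]; rfl
    conv_lhs => rw [← h0]
    exact (hN 0).1 x
  have hx0 : x ∈ (fun s => N s x) '' Set.Icc (0:ℝ) t :=
    ⟨0, ⟨le_rfl, ht.1⟩, hN0⟩
  have hsubC : (fun s => N s x) '' Set.Icc (0:ℝ) t ⊆ connectedComponentIn (D \ A) x :=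
    hS.subset_connectedComponentIn hx0 (fun p ⟨s, hs, hsp⟩ => hsp ▸ hfDA s hs)
  have hccx : connectedComponentIn (D \ A) y = connectedComponentIn (D \ A) x :=
    connectedComponentIn_eq (hGy hx)
  have hNt_mem : N t x ∈ connectedComponentIn (D \ A) y := by
    rw [hccx]
    exact hsubC ⟨t, ⟨ht.1, le_rfl⟩, rfl⟩
  have hNt_z : N t x ∈ connectedComponentIn (D \ A) z := hGz ⟨x, hx, rfl⟩
  exact hne ((connectedComponentIn_eq hNt_mem).trans (connectedComponentIn_eq hNt_z).symm)
end
end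

section
/- Let α(x) = u·x + a be a rigid motion with |u| = 1, let n be a positive integer, and suppose |u − 1| ≤ 1/n. Then ‖αⁿ − j‖ ≥ (n/2)·‖α − j‖, where αⁿ denotes the n-th iterate of α. -/
open MeasureTheory Set Filter

noncomputable section

/-- If `α(x) = ux + a`, `|u| = 1` and `|u − 1| ≤ 1/n`, then
`‖αⁿ − j‖ ≥ (n/2)·‖α − j‖`. -/
theorem stmt_9 (u a : ℂ) (hu : ‖u‖ = 1) (n : ℕ) (hn : 0 < n)
    (hclose : ‖u - 1‖ ≤ 1 / (n : ℝ)) :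
    (n : ℝ) / 2 * Lnorm ((fun x => u * x + a) - id) ≤
      Lnorm ((fun x => u * x + a)^[n] - id) := by


  set S : ℂ := ∑ k ∈ Finset.range n, u ^ k with hS
  have hiter0 : ∀ m : ℕ, (fun x => u * x + a)^[m] 0 = a * ∑ k ∈ Finset.range m, u ^ k := by
    intro m
    induction m with
    | zero => simp
    | succ m ih =>
      rw [Function.iterate_succ_apply', ih, geom_sum_succ]
      ring
  have hiter1 : ∀ m : ℕ, (fun x => u * x + a)^[m] 1 = u ^ m + a * ∑ k ∈ Finset.range m, u ^ k := by
    intro m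
    induction m with
    | zero => simp
    | succ m ih =>
      rw [Function.iterate_succ_apply', ih, geom_sum_succ]
      ring
  have hnpos : (0:ℝ) < n := Nat.cast_pos.mpr hn
  -- |u^k - 1| ≤ k * |u - 1|
  have habsk : ∀ k : ℕ, ‖u ^ k - 1‖ ≤ (k : ℝ) * ‖u - 1‖ := by
    intro k
    have := geom_sum_mul u k
    calc ‖u ^ k - 1‖ = ‖(∑ i ∈ Finset.range k, u ^ i) * (u - 1)‖ := by
          rw [this]
      _ = ‖∑ i ∈ Finset.range k, u ^ i‖ * ‖u - 1‖ := by
          rw [norm_mul]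
      _ ≤ (k : ℝ) * ‖u - 1‖ := by
          apply mul_le_mul_of_nonneg_right _ (norm_nonneg _)
          calc ‖∑ i ∈ Finset.range k, u ^ i‖
              ≤ ∑ i ∈ Finset.range k, ‖u ^ i‖ := by
                exact norm_sum_le _ _
            _ = ∑ i ∈ Finset.range k, (1:ℝ) := by
                apply Finset.sum_congr rfl; intro i _
                rw [norm_pow, hu, one_pow]
            _ = (k : ℝ) := by simp
  -- |n - S| ≤ (n-1)/2
  have hdiff : ‖(n : ℂ) - S‖ ≤ ((n : ℝ) - 1) / 2 := by
    have : (n : ℂ) - S = ∑ k ∈ Finset.range n, (1 - u ^ k) := by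
      rw [hS, Finset.sum_sub_distrib]
      simp
    rw [this]
    calc ‖∑ k ∈ Finset.range n, (1 - u ^ k)‖
        ≤ ∑ k ∈ Finset.range n, ‖1 - u ^ k‖ := norm_sum_le _ _
      _ ≤ ∑ k ∈ Finset.range n, (k : ℝ) * ‖u - 1‖ := by
          apply Finset.sum_le_sum; intro k _
          rw [← norm_neg, neg_sub]
          exact habsk k
      _ ≤ ∑ k ∈ Finset.range n, (k : ℝ) * (1 / (n : ℝ)) := by
          apply Finset.sum_le_sum; intro k _
          exact mul_le_mul_of_nonneg_left hclose (Nat.cast_nonneg k)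
      _ = (∑ k ∈ Finset.range n, (k : ℝ)) * (1 / (n : ℝ)) := by
          rw [Finset.sum_mul]
      _ = ((n : ℝ) - 1) / 2 := by
          have : (∑ k ∈ Finset.range n, (k : ℝ)) = (n : ℝ) * ((n : ℝ) - 1) / 2 := by
            clear * - hn
            cases n with
            | zero => simp
            | succ m =>
              have h2 := Finset.sum_range_id_mul_two (m + 1)
              simp only [Nat.add_sub_cancel] at h2
              have h3 : ((∑ k ∈ Finset.range (m + 1), k : ℕ) : ℝ) * 2
                  = ((m : ℝ) + 1) * (m : ℝ) := by exact_mod_cast congrArg (Nat.cast : ℕ → ℝ) h2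
              rw [Nat.cast_sum] at h3
              push_cast at h3 ⊢
              linarith
          rw [this]; field_simp
  -- |S| ≥ n/2
  have hSbig : (n : ℝ) / 2 ≤ ‖S‖ := by
    have h1 : ‖(n : ℂ)‖ ≤ ‖(n : ℂ) - S‖ + ‖S‖ := by
      calc ‖(n : ℂ)‖ = ‖((n : ℂ) - S) + S‖ := by ring_nf
        _ ≤ _ := norm_add_le _ _
    have h2 : ‖(n : ℂ)‖ = (n : ℝ) := by
      rw [Complex.norm_natCast]
    linarith
  -- compute both Lnorms
  have hun : u ^ n - 1 = S * (u - 1) := (geom_sum_mul u n).symm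
  have hL1 : Lnorm ((fun x => u * x + a) - id) = ‖u - 1‖ + ‖a‖ := by
    simp only [Lnorm, Pi.sub_apply, id_eq]
    ring_nf
  have hL2 : Lnorm ((fun x => u * x + a)^[n] - id)
      = ‖S‖ * ‖u - 1‖ + ‖a‖ * ‖S‖ := by
    simp only [Lnorm, Pi.sub_apply, id_eq, hiter0 n, hiter1 n, ← hS]
    rw [show u ^ n + a * S - 1 - (a * S - 0) = u ^ n - 1 by ring, hun, sub_zero,
      norm_mul, norm_mul]
  rw [hL1, hL2]
  nlinarith [norm_nonneg (u - 1), norm_nonneg a, hSbig,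
    mul_le_mul_of_nonneg_right hSbig (norm_nonneg (u - 1)),
    mul_le_mul_of_nonneg_right hSbig (norm_nonneg a)]
end
end

section
/- Every set A ⊆ ℂ of Hausdorff dimension less than 1 has property (Kˢ). -/
open MeasureTheory Set Filter
open scoped ENNReal NNReal

noncomputable section

def mov (θ : ℝ) (c : ℂ) : ℝ → ℂ → ℂ := fun t x =>
  Complex.exp (((θ * t : ℝ) : ℂ) * Complex.I) * x + (t : ℂ) * c

lemma lipschitz_expI : LipschitzWith 1 (fun t : ℝ => Complex.exp ((t : ℂ) * Complex.I)) := by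
  have hd : ∀ z : ℂ, HasDerivAt (fun z : ℂ => Complex.exp (z * Complex.I))
      (Complex.exp (z * Complex.I) * (1 * Complex.I)) z := fun z =>
    (Complex.hasDerivAt_exp (z * Complex.I)).comp z ((hasDerivAt_id z).mul_const Complex.I)
  have hd' : ∀ t : ℝ, HasDerivAt (fun t : ℝ => Complex.exp ((t : ℂ) * Complex.I))
      (Complex.exp ((t : ℂ) * Complex.I) * (1 * Complex.I)) t := fun t => (hd t).comp_ofReal
  apply lipschitzWith_of_nnnorm_deriv_le (fun t => (hd' t).differentiableAt)
  intro t
  rw [(hd' t).deriv]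
  simp [← NNReal.coe_le_coe, Complex.norm_exp_ofReal_mul_I]

lemma mov_dist_t (θ : ℝ) (c : ℂ) (t s : ℝ) (x : ℂ) :
    dist (mov θ c t x) (mov θ c s x) ≤ |t - s| * (|θ| * ‖x‖ + ‖c‖) := by
  have h1 : mov θ c t x - mov θ c s x =
      (Complex.exp (((θ * t : ℝ) : ℂ) * Complex.I) -
        Complex.exp (((θ * s : ℝ) : ℂ) * Complex.I)) * x + ((t : ℂ) - s) * c := by
    simp [mov]; ring
  rw [Complex.dist_eq, h1]
  calc ‖_‖ ≤ ‖((Complex.exp (((θ * t : ℝ) : ℂ) * Complex.I) -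
        Complex.exp (((θ * s : ℝ) : ℂ) * Complex.I)) * x)‖ + ‖(((t : ℂ) - s) * c)‖ :=
        norm_add_le _ _
    _ ≤ |θ * t - θ * s| * ‖x‖ + |t - s| * ‖c‖ := by
        rw [norm_mul, norm_mul]
        gcongr
        · have := lipschitz_expI.dist_le_mul (θ * t) (θ * s)
          simpa [Complex.dist_eq, Real.dist_eq] using this
        · rw [← Complex.ofReal_sub, Complex.norm_real, Real.norm_eq_abs]
    _ ≤ |t - s| * (|θ| * ‖x‖ + ‖c‖) := by
        rw [← mul_sub, abs_mul]
        ring_nf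
        nlinarith [abs_nonneg (t - s), abs_nonneg θ, norm_nonneg x, norm_nonneg c]

lemma mov_dist_x (θ : ℝ) (c : ℂ) (t : ℝ) (x y : ℂ) :
    dist (mov θ c t x) (mov θ c t y) = dist x y := by
  rw [Complex.dist_eq, Complex.dist_eq]
  have : mov θ c t x - mov θ c t y =
      Complex.exp (((θ * t : ℝ) : ℂ) * Complex.I) * (x - y) := by simp [mov]; ring
  rw [this, norm_mul, Complex.norm_exp_ofReal_mul_I, one_mul]

lemma sweep_iUnion (M : ℝ → ℂ → ℂ) (S : ℕ → Set ℂ) :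
    sweep M (⋃ n, S n) = ⋃ n, sweep M (S n) := by
  ext y
  simp only [sweep, mem_setOf_eq, mem_iUnion, Set.mem_Icc]
  exact ⟨fun ⟨t, ht, x, ⟨n, hx⟩, hyx⟩ => ⟨n, t, ht, x, hx, hyx⟩,
    fun ⟨n, t, ht, x, hx, hyx⟩ => ⟨t, ht, x, ⟨n, hx⟩, hyx⟩⟩

lemma sweep_mono (M : ℝ → ℂ → ℂ) {A B : Set ℂ} (h : A ⊆ B) : sweep M A ⊆ sweep M B := by
  rintro y ⟨t, ht, x, hx, hyx⟩
  exact ⟨t, ht, x, h hx, hyx⟩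

lemma exists_cover (B : Set ℂ) (h1 : μH[(1:ℝ)] B = 0) {ε : ℝ} (hε : 0 < ε) :
    ∃ t : ℕ → Set ℂ, B ⊆ ⋃ i, t i ∧ ∑' i, EMetric.diam (t i) < ENNReal.ofReal ε := by
  rw [MeasureTheory.Measure.hausdorffMeasure_apply] at h1
  have h2 : (⨅ (t : ℕ → Set ℂ) (_ : B ⊆ ⋃ n, t n) (_ : ∀ n, EMetric.diam (t n) ≤ 1),
      ∑' n, ⨆ _ : (t n).Nonempty, EMetric.diam (t n) ^ (1:ℝ)) = 0 := by
    refine le_antisymm ?_ zero_le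
    rw [← h1]
    exact le_iSup₂ (f := fun (r : ℝ≥0∞) (_ : 0 < r) => ⨅ (t : ℕ → Set ℂ) (_ : B ⊆ ⋃ n, t n)
      (_ : ∀ n, EMetric.diam (t n) ≤ r), ∑' n, ⨆ _ : (t n).Nonempty, EMetric.diam (t n) ^ (1:ℝ))
      1 zero_lt_one
  have h3 : (⨅ (t : ℕ → Set ℂ) (_ : B ⊆ ⋃ n, t n) (_ : ∀ n, EMetric.diam (t n) ≤ 1),
      ∑' n, ⨆ _ : (t n).Nonempty, EMetric.diam (t n) ^ (1:ℝ)) < ENNReal.ofReal ε := by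
    rw [h2]; exact ENNReal.ofReal_pos.mpr hε
  simp only [iInf_lt_iff] at h3
  obtain ⟨t, hcov, _, hsum⟩ := h3
  refine ⟨t, hcov, lt_of_le_of_lt (ENNReal.tsum_le_tsum fun i => ?_) hsum⟩
  rcases Set.eq_empty_or_nonempty (t i) with he | hne
  · simp [he]; exact Metric.ediam_empty
  · rw [iSup_pos hne, ENNReal.rpow_one]

lemma sweep_null_bounded (θ : ℝ) (c : ℂ) (n : ℕ) (B : Set ℂ)
    (hBn : B ⊆ Metric.closedBall 0 n) (h1 : μH[(1:ℝ)] B = 0) :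
    volume (sweep (mov θ c) B) = 0 := by
  classical
  set L : ℝ := |θ| * n + ‖c‖ + 1 with hLdef
  have hL1 : 1 ≤ L := by
    have h0 : 0 ≤ |θ| * n := by positivity
    have h0' : 0 ≤ ‖c‖ := norm_nonneg c
    simp only [hLdef]; linarith
  have key : ∀ ε : ℝ, 0 < ε → ε ≤ 1 →
      volume (sweep (mov θ c) B) ≤ ENNReal.ofReal ((32 * L + 128) * ε) := by
    intro ε hε hε1
    obtain ⟨t, hcov, hsum⟩ := exists_cover B h1 hε
    set s : ℕ → Set ℂ := fun i => t i ∩ B with hsdef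
    have hsB : ∀ i, s i ⊆ B := fun i => inter_subset_right
    have hsbd : ∀ i, Bornology.IsBounded (s i) := fun i =>
      Metric.isBounded_closedBall.subset ((hsB i).trans hBn)
    have hsd : ∀ i, EMetric.diam (s i) ≤ EMetric.diam (t i) := fun i =>
      EMetric.diam_mono inter_subset_left
    set r : ℕ → ℝ := fun i => Metric.diam (s i) with hrdef
    have hr0 : ∀ i, 0 ≤ r i := fun i => Metric.diam_nonneg
    have hediam : ∀ i, EMetric.diam (s i) ≤ ENNReal.ofReal ε := fun i =>
      le_trans (hsd i) (le_trans (ENNReal.le_tsum i) hsum.le)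
    have hrε : ∀ i, r i ≤ ε := fun i =>
      ENNReal.toReal_le_of_le_ofReal hε.le (hediam i)
    set δ : ℕ → ℝ := fun i => r i + ε / 2 / 2 ^ i with hδdef
    have hδpos : ∀ i, 0 < δ i := fun i => by
      have := hr0 i; simp only [hδdef]; positivity
    have hδ2ε : ∀ i, δ i ≤ 2 * ε := fun i => by
      have h7 : ε / 2 / 2 ^ i ≤ ε := by
        have h8 : (1:ℝ) ≤ 2 ^ i := one_le_pow₀ (by norm_num)
        rw [div_div]
        refine div_le_self hε.le ?_
        nlinarith
      have := hrε i; simp only [hδdef]; linarith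
    have hδ2 : ∀ i, δ i ≤ 2 := fun i => by have := hδ2ε i; linarith
    set m : ℕ → ℕ := fun i => ⌈L / δ i⌉₊ with hmdef
    have hmpos : ∀ i, 0 < m i := fun i =>
      Nat.ceil_pos.mpr (by have := hδpos i; positivity)
    have hmposR : ∀ i, (0:ℝ) < m i := fun i => by exact_mod_cast hmpos i
    have hmL : ∀ i, L / m i ≤ δ i := fun i => by
      rw [div_le_iff₀ (hmposR i)]
      have h9 : L / δ i ≤ (m i : ℝ) := Nat.le_ceil _
      calc L = (L / δ i) * δ i := (div_mul_cancel₀ L (hδpos i).ne').symm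
        _ ≤ (m i : ℝ) * δ i := mul_le_mul_of_nonneg_right h9 (hδpos i).le
        _ = δ i * m i := by ring
    set xc : ℕ → ℂ := fun i => if h : (s i).Nonempty then h.some else 0 with hxcdef
    set G : ℕ → Set ℂ := fun i =>
      ⋃ k ∈ Finset.range (m i + 1),
        Metric.closedBall (mov θ c ((k : ℝ) / m i) (xc i)) (2 * δ i) with hGdef
    have hGcov : sweep (mov θ c) B ⊆ ⋃ i, G i := by
      rintro y ⟨τ, hτ, x, hx, rfl⟩
      obtain ⟨i, hxi⟩ : ∃ i, x ∈ t i := mem_iUnion.1 (hcov hx)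
      have hxs : x ∈ s i := ⟨hxi, hx⟩
      have hne : (s i).Nonempty := ⟨x, hxs⟩
      have hxc : xc i ∈ s i := by simp only [hxcdef, dif_pos hne]; exact hne.some_mem
      have hτ0 : (0:ℝ) ≤ τ := hτ.1
      have hτ1 : τ ≤ 1 := hτ.2
      set k : ℕ := ⌊τ * m i⌋₊ with hkdef
      have hkm : k ≤ m i := by
        have h10 : τ * m i ≤ (m i : ℝ) := by nlinarith [hmposR i]
        calc k ≤ ⌊(m i : ℝ)⌋₊ := Nat.floor_le_floor h10
          _ = m i := Nat.floor_natCast _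
      refine mem_iUnion.2 ⟨i, ?_⟩
      refine mem_biUnion (Finset.mem_range.2 (Nat.lt_succ_of_le hkm)) ?_
      rw [Metric.mem_closedBall]
      have hd1 : dist (mov θ c τ x) (mov θ c τ (xc i)) ≤ r i := by
        rw [mov_dist_x]; exact Metric.dist_le_diam_of_mem (hsbd i) hxs hxc
      have habs : ‖xc i‖ ≤ n := by
        have h11 := hBn (hsB i hxc)
        rw [Metric.mem_closedBall, Complex.dist_eq, sub_zero] at h11
        exact h11
      have hd2 : dist (mov θ c τ (xc i)) (mov θ c ((k:ℝ)/m i) (xc i)) ≤ δ i := by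
        refine le_trans (mov_dist_t θ c τ _ _) ?_
        have h13 : (k:ℝ) ≤ τ * m i := Nat.floor_le (by positivity)
        have h12 : τ * m i < (k:ℝ) + 1 := Nat.lt_floor_add_one _
        have hkmτ : (k:ℝ) / m i ≤ τ := by
          rw [div_le_iff₀ (hmposR i)]; exact h13
        have hτk : τ ≤ (k:ℝ) / m i + 1 / m i := by
          rw [← add_div, le_div_iff₀ (hmposR i)]; linarith
        have h14 : (0:ℝ) < 1 / m i := by positivity
        have h6 : |τ - (k:ℝ) / m i| ≤ 1 / m i := by
          rw [abs_le]; constructor <;> linarith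
        have h7 : |θ| * ‖xc i‖ + ‖c‖ ≤ L := by
          have : |θ| * ‖xc i‖ ≤ |θ| * n :=
            mul_le_mul_of_nonneg_left habs (abs_nonneg θ)
          simp only [hLdef]; linarith
        have hnn : (0:ℝ) ≤ |θ| * ‖xc i‖ + ‖c‖ := by
          have h1a := norm_nonneg (xc i)
          have h1b := norm_nonneg c
          have h1c := abs_nonneg θ
          nlinarith
        calc |τ - (k:ℝ)/m i| * (|θ| * ‖xc i‖ + ‖c‖)
            ≤ (1 / m i) * L := mul_le_mul h6 h7 hnn (by positivity)
          _ = L / m i := by ring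
          _ ≤ δ i := hmL i
      calc dist (mov θ c τ x) (mov θ c ((k:ℝ)/m i) (xc i))
          ≤ dist (mov θ c τ x) (mov θ c τ (xc i)) +
            dist (mov θ c τ (xc i)) (mov θ c ((k:ℝ)/m i) (xc i)) := dist_triangle _ _ _
        _ ≤ r i + δ i := add_le_add hd1 hd2
        _ ≤ 2 * δ i := by
            have h15 : r i ≤ δ i := by
              have : (0:ℝ) ≤ ε / 2 / 2 ^ i := by positivity
              simp only [hδdef]; linarith
            linarith
    have hπ4 : (NNReal.pi : ℝ≥0∞) ≤ ENNReal.ofReal 4 := by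
      rw [← ENNReal.ofReal_coe_nnreal]
      exact ENNReal.ofReal_le_ofReal (by simpa using Real.pi_le_four)
    have hGvol : ∀ i, volume (G i) ≤ ENNReal.ofReal ((16 * L + 64) * δ i) := by
      intro i
      calc volume (G i)
          ≤ ∑ k ∈ Finset.range (m i + 1),
            volume (Metric.closedBall (mov θ c ((k:ℝ)/m i) (xc i)) (2 * δ i)) :=
            measure_biUnion_finset_le _ _
        _ = (m i + 1 : ℕ) * (ENNReal.ofReal (2 * δ i) ^ 2 * NNReal.pi) := by
            simp [Complex.volume_closedBall, Finset.sum_const, Finset.card_range, nsmul_eq_mul]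
        _ ≤ (m i + 1 : ℕ) * (ENNReal.ofReal ((2 * δ i) ^ 2) * ENNReal.ofReal 4) := by
            rw [ENNReal.ofReal_pow (by positivity)]
            gcongr
        _ = ENNReal.ofReal (((m i : ℝ) + 1) * ((2 * δ i) ^ 2 * 4)) := by
            rw [← ENNReal.ofReal_mul (by positivity),
              ← ENNReal.ofReal_natCast (m i + 1),
              ← ENNReal.ofReal_mul (by positivity)]
            congr 1
            push_cast
            ring
        _ ≤ ENNReal.ofReal ((16 * L + 64) * δ i) := by
            refine ENNReal.ofReal_le_ofReal ?_
            have h15 : (m i : ℝ) < L / δ i + 1 := Nat.ceil_lt_add_one (by positivity)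
            have h16 : (m i : ℝ) * δ i < L + δ i := by
              have h17 := mul_lt_mul_of_pos_right h15 (hδpos i)
              rw [add_mul, div_mul_cancel₀ _ (hδpos i).ne', one_mul] at h17
              exact h17
            nlinarith [hδpos i, hδ2 i, hmposR i]
    have hsplit : ∀ i, ENNReal.ofReal (δ i) =
        ENNReal.ofReal (r i) + ENNReal.ofReal (ε / 2 / 2 ^ i) := fun i =>
      ENNReal.ofReal_add (hr0 i) (by positivity)
    have hsum1 : ∑' i, ENNReal.ofReal (r i) ≤ ENNReal.ofReal ε := by
      calc ∑' i, ENNReal.ofReal (r i) ≤ ∑' i, EMetric.diam (s i) :=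
            ENNReal.tsum_le_tsum fun i => ENNReal.ofReal_toReal_le
        _ ≤ ∑' i, EMetric.diam (t i) := ENNReal.tsum_le_tsum hsd
        _ ≤ ENNReal.ofReal ε := hsum.le
    have hsum2 : ∑' i, ENNReal.ofReal (ε / 2 / 2 ^ i) = ENNReal.ofReal ε := by
      rw [← ENNReal.ofReal_tsum_of_nonneg (fun i => by positivity)
        (summable_geometric_two' ε), tsum_geometric_two']
    have hsumδ : ∑' i, ENNReal.ofReal (δ i) ≤ ENNReal.ofReal (2 * ε) := by
      calc ∑' i, ENNReal.ofReal (δ i)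
          = (∑' i, ENNReal.ofReal (r i)) + ∑' i, ENNReal.ofReal (ε / 2 / 2 ^ i) := by
            rw [← ENNReal.tsum_add]; exact tsum_congr hsplit
        _ ≤ ENNReal.ofReal ε + ENNReal.ofReal ε := add_le_add hsum1 hsum2.le
        _ = ENNReal.ofReal (2 * ε) := by
            rw [two_mul, ENNReal.ofReal_add hε.le hε.le]
    calc volume (sweep (mov θ c) B) ≤ volume (⋃ i, G i) := measure_mono hGcov
      _ ≤ ∑' i, volume (G i) := measure_iUnion_le _
      _ ≤ ∑' i, ENNReal.ofReal ((16 * L + 64) * δ i) := ENNReal.tsum_le_tsum hGvol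
      _ = ENNReal.ofReal (16 * L + 64) * ∑' i, ENNReal.ofReal (δ i) := by
          rw [← ENNReal.tsum_mul_left]
          refine tsum_congr fun i => ?_
          rw [← ENNReal.ofReal_mul (by positivity)]
      _ ≤ ENNReal.ofReal (16 * L + 64) * ENNReal.ofReal (2 * ε) := by gcongr
      _ = ENNReal.ofReal ((32 * L + 128) * ε) := by
          rw [← ENNReal.ofReal_mul (by positivity)]
          congr 1
          ring
  refine le_antisymm ?_ zero_le
  refine ENNReal.le_of_forall_pos_le_add fun η hη _ => ?_
  rw [zero_add]
  have hK : (0:ℝ) < 32 * L + 128 := by linarith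
  set ε : ℝ := min 1 ((η : ℝ) / (32 * L + 128)) with hεdef
  have hεpos : 0 < ε := lt_min one_pos (by positivity)
  calc volume (sweep (mov θ c) B) ≤ ENNReal.ofReal ((32 * L + 128) * ε) :=
      key ε hεpos (min_le_left _ _)
    _ ≤ ENNReal.ofReal (η : ℝ) := by
        refine ENNReal.ofReal_le_ofReal ?_
        have h18 : ε ≤ (η : ℝ) / (32 * L + 128) := min_le_right _ _
        calc (32 * L + 128) * ε ≤ (32 * L + 128) * ((η:ℝ) / (32 * L + 128)) :=
              mul_le_mul_of_nonneg_left h18 hK.le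
          _ = η := by field_simp
    _ = (η : ℝ≥0∞) := ENNReal.ofReal_coe_nnreal

lemma sweep_null (θ : ℝ) (c : ℂ) (A : Set ℂ) (h : dimH A < 1) :
    volume (sweep (mov θ c) A) = 0 := by
  have h1 : μH[(1:ℝ)] A = 0 := by
    have h2 : dimH A < ((1:ℝ≥0) : ℝ≥0∞) := by simpa using h
    simpa using hausdorffMeasure_of_dimH_lt h2
  have hA : A = ⋃ n : ℕ, A ∩ Metric.closedBall 0 n := by
    ext x
    simp only [mem_iUnion, mem_inter_iff, Metric.mem_closedBall]
    constructor
    · intro hx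
      obtain ⟨n, hn⟩ := exists_nat_ge (dist x 0)
      exact ⟨n, hx, hn⟩
    · rintro ⟨n, hx, _⟩; exact hx
  rw [hA, sweep_iUnion]
  refine measure_iUnion_null fun n => ?_
  exact sweep_null_bounded θ c n _ inter_subset_right
    (measure_mono_null inter_subset_left h1)


/-- Every set of Hausdorff dimension less than 1 has property (Kˢ). -/
theorem stmt_13 (A : Set ℂ) (h : dimH A < 1) : HasPropKs A := by
  rintro α ⟨u, c, hu, rfl⟩ ε hε
  refine ⟨mov u.arg c, ⟨?_, ?_, ?_⟩, ?_, ?_⟩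
  · intro t _
    exact ⟨Complex.exp (((u.arg * t : ℝ) : ℂ) * Complex.I), (t : ℂ) * c,
      Complex.norm_exp_ofReal_mul_I _, rfl⟩
  · refine Continuous.continuousOn ?_
    have : Continuous fun p : ℝ × ℂ =>
        Complex.exp (((u.arg * p.1 : ℝ) : ℂ) * Complex.I) * p.2 + (p.1 : ℂ) * c := by
      fun_prop
    exact this
  · funext x
    simp [mov]
  · funext x
    have h3 : ((u.arg * 1 : ℝ) : ℂ) = (u.arg : ℂ) := by push_cast; ring
    have h4 : Complex.exp ((u.arg : ℂ) * Complex.I) = u := by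
      have := Complex.norm_mul_exp_arg_mul_I u
      rwa [hu, Complex.ofReal_one, one_mul] at this
    simp only [mov, h3, h4, Complex.ofReal_one, one_mul]
  · rw [sweep_null u.arg c A h]
    exact ENNReal.ofReal_pos.mpr hε
end
end

section
/- Let C = {x ∈ ℂ : |x − p| = r} be a circle of centre p and radius r > 0, and let M be a continuous movement such that M₁(C) ∩ C = ∅. Then the open disc {x ∈ ℂ : |x − p| < r} is contained in W_M(C); in particular λ(W_M(C)) ≥ π·r². -/
open MeasureTheory Set Filter

noncomputable section

lemma rigid_dist {f : ℂ → ℂ} (hf : IsRigidMotion f) (x y : ℂ) :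
    ‖f x - f y‖ = ‖x - y‖ := by
  obtain ⟨u, c, hu, rfl⟩ := hf
  simp only
  rw [show u * x + c - (u * y + c) = u * (x - y) by ring, norm_mul, hu, one_mul]

lemma rigid_preimage {f : ℂ → ℂ} (hf : IsRigidMotion f) (z : ℂ) :
    ∃ x, f x = z := by
  obtain ⟨u, c, hu, rfl⟩ := hf
  have hu0 : u ≠ 0 := by
    intro h; rw [h] at hu; simp at hu
  exact ⟨u⁻¹ * (z - c), by show u * (u⁻¹ * (z - c)) + c = z; rw [mul_inv_cancel_left₀ hu0, sub_add_cancel]⟩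

lemma sphere_meet (p q : ℂ) (r : ℝ) (hr : 0 < r)
    (h : ‖q - p‖ ≤ 2 * r) :
    ∃ z, ‖z - p‖ = r ∧ ‖z - q‖ = r := by
  set d := ‖q - p‖ with hd
  rcases eq_or_ne q p with h' | hne
  · exact ⟨q + r, by simp [h', abs_of_pos hr], by simp [abs_of_pos hr]⟩
  · have hd0 : 0 < d := by
      simpa [hd, sub_eq_zero] using hne
    set e : ℂ := (q - p) / d with he
    have habse : ‖e‖ = 1 := by
      rw [he, norm_div, Complex.norm_real, Real.norm_eq_abs, abs_of_pos hd0, div_self hd0.ne']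
    set h2 : ℝ := Real.sqrt (r ^ 2 - (d / 2) ^ 2) with hh2
    have hnn : 0 ≤ r ^ 2 - (d / 2) ^ 2 := by nlinarith
    have hsq : h2 ^ 2 = r ^ 2 - (d / 2) ^ 2 := Real.sq_sqrt hnn
    refine ⟨p + (↑(d / 2) + ↑h2 * Complex.I) * e, ?_, ?_⟩
    · rw [show p + (↑(d / 2) + ↑h2 * Complex.I) * e - p = (↑(d / 2) + ↑h2 * Complex.I) * e by ring,
        norm_mul, habse, mul_one, Complex.norm_add_mul_I]
      rw [show (d/2)^2 + h2^2 = r^2 by linarith, Real.sqrt_sq hr.le]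
    · have hdC : (d:ℂ) ≠ 0 := by exact_mod_cast hd0.ne'
      have hqp : q - p = d * e := by
        rw [he]; exact (mul_div_cancel₀ _ hdC).symm
      rw [show p + (↑(d / 2) + ↑h2 * Complex.I) * e - q
          = (↑(d / 2) + ↑h2 * Complex.I) * e - (q - p) by ring, hqp,
        show (↑(d / 2) + ↑h2 * Complex.I) * e - ↑d * e = (↑(-(d/2)) + ↑h2 * Complex.I) * e by
          push_cast; ring,
        norm_mul, habse, mul_one, Complex.norm_add_mul_I]
      rw [show (-(d/2))^2 + h2^2 = r^2 by nlinarith, Real.sqrt_sq hr.le]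

private theorem stmt15_aux (p : ℂ) (r : ℝ) (hr : 0 < r) (M : ℝ → ℂ → ℂ)
    (hM : IsContMovement M)
    (hdisj : (M 1) '' Metric.sphere p r ∩ Metric.sphere p r = ∅) :
    Metric.ball p r ⊆ {y | ∃ t ∈ Set.Icc (0:ℝ) 1, ∃ x ∈ Metric.sphere p r, M t x = y} := by
  obtain ⟨hrig, hcont, h0⟩ := hM
  have h1 : (1:ℝ) ∈ Set.Icc (0:ℝ) 1 := ⟨zero_le_one, le_refl 1⟩
  have hrig1 := hrig 1 h1
  set q := M 1 p with hq
  have hgt : 2 * r < ‖q - p‖ := by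
    by_contra hle; push_neg at hle
    obtain ⟨z, hzp, hzq⟩ := sphere_meet p q r hr hle
    obtain ⟨x, hxz⟩ := rigid_preimage hrig1 z
    have hxm : x ∈ Metric.sphere p r := by
      rw [Metric.mem_sphere, Complex.dist_eq, ← rigid_dist hrig1 x p, hxz, ← hq]
      exact hzq
    exact Set.eq_empty_iff_forall_notMem.mp hdisj z
      ⟨⟨x, hxm, hxz⟩, by rwa [Metric.mem_sphere, Complex.dist_eq]⟩
  intro y hy
  have hy' : ‖y - p‖ < r := by
    rwa [Metric.mem_ball, Complex.dist_eq] at hy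
  set g : ℝ → ℝ := fun t => ‖y - M t p‖ with hg
  have hcg : ContinuousOn g (Set.Icc (0:ℝ) 1) := by
    have hmp : ContinuousOn (fun t : ℝ => M t p) (Set.Icc (0:ℝ) 1) := by
      have hc2 : Continuous (fun t : ℝ => ((t, p) : ℝ × ℂ)) := by continuity
      exact hcont.comp hc2.continuousOn (fun t ht => ⟨ht, Set.mem_univ p⟩)
    exact (continuous_norm.comp_continuousOn
      ((continuousOn_const).sub hmp))
  have hg0 : g 0 ≤ r := by simp [hg, h0]; exact hy'.le
  have hg1 : r ≤ g 1 := by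
    have htri : ‖q - p‖ ≤ ‖y - q‖ + ‖y - p‖ := by
      calc ‖q - p‖ = ‖(q - y) + (y - p)‖ := by ring_nf
        _ ≤ ‖q - y‖ + ‖y - p‖ := norm_add_le _ _
        _ = ‖y - q‖ + ‖y - p‖ := by
            rw [norm_sub_rev]
    have : r < ‖y - q‖ := by linarith
    simpa [hg, hq] using this.le
  have := intermediate_value_Icc zero_le_one hcg ⟨hg0, hg1⟩
  obtain ⟨t, ht, hgt'⟩ := this
  obtain ⟨x, hxy⟩ := rigid_preimage (hrig t ht) y
  have hxm : x ∈ Metric.sphere p r := by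
    rw [Metric.mem_sphere, Complex.dist_eq, ← rigid_dist (hrig t ht) x p, hxy]
    exact hgt'
  exact ⟨t, ht, x, hxm, hxy⟩

/-- If a continuous movement takes the circle `C` of centre `p` and radius
`r > 0` to a circle disjoint from `C`, then the moving circle touches every
point of the open disc; in particular `λ(W_M(C)) ≥ πr²`. -/
theorem stmt_15 (p : ℂ) (r : ℝ) (hr : 0 < r) (M : ℝ → ℂ → ℂ)
    (hM : IsContMovement M)
    (hdisj : (M 1) '' Metric.sphere p r ∩ Metric.sphere p r = ∅) :
    Metric.ball p r ⊆ sweep M (Metric.sphere p r) ∧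
    ENNReal.ofReal (Real.pi * r ^ 2) ≤
      MeasureTheory.volume (sweep M (Metric.sphere p r)) := by
  have hsub : Metric.ball p r ⊆ sweep M (Metric.sphere p r) :=
    stmt15_aux p r hr M hM hdisj
  refine ⟨hsub, ?_⟩
  calc ENNReal.ofReal (Real.pi * r ^ 2) = MeasureTheory.volume (Metric.ball p r) := by
        rw [Complex.volume_ball, ENNReal.ofReal_mul Real.pi_pos.le,
          ← ENNReal.ofReal_pow hr.le, mul_comm, ← NNReal.coe_real_pi,
          ENNReal.ofReal_coe_nnreal]
    _ ≤ MeasureTheory.volume (sweep M (Metric.sphere p r)) := measure_mono hsub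
end
end

section
/- A full circle C = {x ∈ ℂ : |x − p| = r} (r > 0) does not have property (Kˢ). In particular, properties (K) and (Kˢ) are not equivalent, since every circle has property (K). -/
open MeasureTheory Set Filter

noncomputable section

lemma sphere_sub_sweep (p : ℂ) (r : ℝ) (hr : 0 < r) (M : ℝ → ℂ → ℂ)
    (hM : IsContMovement M) (hM1 : M 1 = fun x => x + ((3 * r : ℝ) : ℂ)) :
    Metric.closedBall p r ⊆ sweep M (Metric.sphere p r) := by
  obtain ⟨hRM, hc, h0⟩ := hM
  intro q hq
  have hqp : ‖q - p‖ ≤ r := by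
    rw [← dist_eq_norm]; exact Metric.mem_closedBall.mp hq
  -- continuity of t ↦ M t p on [0,1]
  have hMp : ContinuousOn (fun t => M t p) (Set.Icc (0:ℝ) 1) := by
    have := hc.comp (f := fun t : ℝ => ((t, p) : ℝ × ℂ))
      (continuous_id.prodMk continuous_const).continuousOn
      (fun t ht => ⟨ht, Set.mem_univ _⟩)
    exact this
  set g : ℝ → ℝ := fun t => ‖q - M t p‖ with hg_def
  have hg : ContinuousOn g (Set.Icc (0:ℝ) 1) :=
    (continuousOn_const.sub hMp).norm
  have hg0 : g 0 = ‖q - p‖ := by simp [hg_def, h0]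
  have hg1 : (r : ℝ) ≤ g 1 := by
    have : g 1 = ‖q - (p + (3 * r : ℝ))‖ := by simp [hg_def, hM1]
    rw [this]
    have h1 : ‖((3 * r : ℝ) : ℂ)‖ - ‖q - p‖ ≤ ‖(q - p) - ((3 * r : ℝ) : ℂ)‖ := by
      have h := norm_sub_norm_le (((3 * r : ℝ) : ℂ)) (q - p)
      rwa [norm_sub_rev (((3 * r : ℝ) : ℂ)) (q - p)] at h
    have h2 : ‖((3 * r : ℝ) : ℂ)‖ = 3 * r := by
      rw [Complex.norm_real, Real.norm_eq_abs, abs_of_pos]; linarith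
    have h3 : q - (p + (3 * r : ℝ)) = (q - p) - ((3 * r : ℝ) : ℂ) := by ring
    rw [h3]; linarith
  have hmem : r ∈ Set.Icc (g 0) (g 1) := ⟨by rw [hg0]; exact hqp, hg1⟩
  obtain ⟨t, ht, hgt⟩ := intermediate_value_Icc zero_le_one hg hmem
  obtain ⟨u, c, hu, hMt⟩ := hRM t ht
  have hu' : ‖u‖ = 1 := by exact hu
  have hune : u ≠ 0 := by
    intro h; rw [h] at hu'; simp at hu'
  refine ⟨t, ht, (q - c) / u, ?_, ?_⟩
  · -- (q-c)/u ∈ sphere p r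
    rw [mem_sphere_iff_norm]
    have : (q - c) / u - p = (q - (u * p + c)) / u := by
      field_simp; ring
    rw [this, norm_div, hu', div_one]
    have : u * p + c = M t p := by rw [hMt]
    rw [this]
    simpa [hg_def, norm_sub_rev] using hgt
  · rw [hMt]
    field_simp
    ring

/-- A full circle does not have property (Kˢ), but has property (K);
hence (K) and (Kˢ) are not equivalent. -/
theorem stmt_16 (p : ℂ) (r : ℝ) (hr : 0 < r) :
    ¬ HasPropKs (Metric.sphere p r) ∧ HasPropK (Metric.sphere p r) := by
  constructor
  · -- ¬ HasPropKs
    intro h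
    set α : ℂ → ℂ := fun x => x + (3 * r : ℝ) with hα
    have hαr : IsRigidMotion α := by
      refine ⟨1, ((3 * r : ℝ) : ℂ), by simp, ?_⟩
      funext x; simp [hα]
    have hball : (0 : ENNReal) < volume (Metric.ball p r) :=
      Metric.measure_ball_pos volume p hr
    have hballt : volume (Metric.ball p r) ≠ ⊤ :=
      (MeasureTheory.measure_ball_lt_top).ne
    set ε : ℝ := (volume (Metric.ball p r)).toReal with hε
    have hεpos : 0 < ε := ENNReal.toReal_pos hball.ne' hballt
    obtain ⟨M, hM, hM1, hvol⟩ := h α hαr ε hεpos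
    have hsub : Metric.closedBall p r ⊆ sweep M (Metric.sphere p r) :=
      sphere_sub_sweep p r hr M hM hM1
    have h1 : volume (Metric.ball p r) ≤ volume (sweep M (Metric.sphere p r)) :=
      le_trans (measure_mono Metric.ball_subset_closedBall) (measure_mono hsub)
    rw [hε, ENNReal.ofReal_toReal hballt] at hvol
    exact absurd (lt_of_le_of_lt h1 hvol) (lt_irrefl _)
  · -- HasPropK : rotate about p
    set α : ℂ → ℂ := fun x => (-1 : ℂ) * x + 2 * p with hα
    refine ⟨α, ⟨-1, 2 * p, by simp, rfl⟩, ?_, ?_⟩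
    · intro h
      have := congrFun h (p + 1)
      simp only [hα, id_eq] at this
      have : (-1 : ℂ) * (p + 1) + 2 * p = p + 1 := this
      have : (2 : ℂ) = 0 := by linear_combination -this
      norm_num at this
    · intro ε hε
      set M : ℝ → ℂ → ℂ := fun t x =>
        Complex.exp ((t : ℂ) * Real.pi * Complex.I) * (x - p) + p with hM
      have habs : ∀ t : ℝ, ‖Complex.exp ((t : ℂ) * Real.pi * Complex.I)‖ = 1 := by
        intro t
        rw [show ((t : ℂ) * Real.pi * Complex.I) = ((t * Real.pi : ℝ) : ℂ) * Complex.I by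
          push_cast; ring]
        exact Complex.norm_exp_ofReal_mul_I _
      refine ⟨M, ⟨?_, ?_, ?_⟩, ?_, ?_⟩
      · intro t ht
        refine ⟨Complex.exp ((t : ℂ) * Real.pi * Complex.I),
          p - Complex.exp ((t : ℂ) * Real.pi * Complex.I) * p, habs t, ?_⟩
        funext x; simp only [hM]; ring
      · apply Continuous.continuousOn
        apply Continuous.add _ continuous_const
        apply Continuous.mul
        · exact Complex.continuous_exp.comp (by continuity)
        · continuity
      · funext x; simp [hM, Complex.exp_zero]
      · funext x
        simp only [hM, hα, Complex.ofReal_one, one_mul, Complex.exp_pi_mul_I]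
        ring
      · have hsub : sweep M (Metric.sphere p r) ⊆ Metric.sphere p r := by
          rintro y ⟨t, ht, x, hx, hxy⟩
          rw [mem_sphere_iff_norm] at hx ⊢
          rw [← hxy]
          simp only [hM]
          rw [show Complex.exp ((t : ℂ) * Real.pi * Complex.I) * (x - p) + p - p
              = Complex.exp ((t : ℂ) * Real.pi * Complex.I) * (x - p) by ring]
          rw [norm_mul, habs t, one_mul, hx]
        have h0 : volume (sweep M (Metric.sphere p r)) = 0 :=
          measure_mono_null hsub (MeasureTheory.Measure.addHaar_sphere volume p r)
        rw [h0]
        exact ENNReal.ofReal_pos.mpr hε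
end
end

section
/- A half line (a closed ray {p + t·v : t ≥ 0} with v ≠ 0) does not have property (Kˢ); indeed, a horizontal half line cannot be moved continuously to a vertical half line while touching only a set of finite area. -/
open MeasureTheory Set Filter

noncomputable section

section HalfLineProof

open Complex Metric

private lemma exp_arg_mul_I (ξ : ℂ) (h : ξ ≠ 0) :
    Complex.exp ((Complex.arg ξ : ℂ) * Complex.I) = ξ / (‖ξ‖ : ℂ) := by
  have h1 := Complex.norm_mul_exp_arg_mul_I ξ
  have h2 : (‖ξ‖ : ℂ) ≠ 0 := by simpa using (norm_ne_zero_iff.mpr h)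
  field_simp
  linear_combination h1

private lemma prod_eq_neg_one (a b : ℂ) (ha : a ≠ 0) (hb : b ≠ 0) :
    (-b)/(‖-b‖ : ℂ) * ((-a)/(‖-a‖ : ℂ))⁻¹ *
      ((-(b/a))/(‖-(b/a)‖ : ℂ))⁻¹ = -1 := by
  have h1 : (‖a‖ : ℂ) ≠ 0 := by simpa using (norm_ne_zero_iff.mpr ha)
  have h2 : (‖b‖ : ℂ) ≠ 0 := by simpa using (norm_ne_zero_iff.mpr hb)
  rw [norm_neg, norm_neg, norm_neg, norm_div]
  push_cast
  field_simp

private lemma abs_add_lower (x y : ℂ) : ‖x‖ - ‖y‖ ≤ ‖x + y‖ := by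
  have h := norm_add_le (x + y) (-y)
  rw [add_neg_cancel_right, norm_neg] at h
  linarith

set_option maxHeartbeats 2000000 in
private lemma core (M : ℝ → ℂ → ℂ) (hM : IsContMovement M) (p v : ℂ) (hv : v ≠ 0)
    (hu1 : M 1 1 - M 1 0 ≠ 1) :
    MeasureTheory.volume (sweep M {x : ℂ | ∃ s : ℝ, 0 ≤ s ∧ x = p + (s : ℂ) * v}) = ⊤ := by
  obtain ⟨hrig, hcont, h0⟩ := hM
  set L : Set ℂ := {x : ℂ | ∃ s : ℝ, 0 ≤ s ∧ x = p + (s : ℂ) * v} with hLdef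
  have h1I : (1:ℝ) ∈ Icc (0:ℝ) 1 := ⟨zero_le_one, le_refl 1⟩
  have h0I : (0:ℝ) ∈ Icc (0:ℝ) 1 := ⟨le_refl 0, zero_le_one⟩
  -- continuity in t for fixed x
  have hMc : ∀ x : ℂ, ContinuousOn (fun t => M t x) (Icc (0:ℝ) 1) := by
    intro x
    exact hcont.comp ((continuous_id.prodMk continuous_const).continuousOn)
      (fun t ht => ⟨ht, mem_univ x⟩)
  set u : ℝ → ℂ := fun t => M t 1 - M t 0 with hudef
  set q : ℝ → ℂ := fun t => M t p with hqdef
  have huc : ContinuousOn u (Icc (0:ℝ) 1) := (hMc 1).sub (hMc 0)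
  have hqc : ContinuousOn q (Icc (0:ℝ) 1) := hMc p
  have habs : ∀ t ∈ Icc (0:ℝ) 1, ‖u t‖ = 1 := by
    intro t ht
    obtain ⟨u₀, c₀, h1, hf⟩ := hrig t ht
    have : u t = u₀ := by simp only [hudef, hf]; ring
    rw [this]; exact h1
  have hune : ∀ t ∈ Icc (0:ℝ) 1, u t ≠ 0 := by
    intro t ht h
    have := habs t ht
    rw [h] at this; simp at this
  have hform : ∀ t ∈ Icc (0:ℝ) 1, ∀ x : ℂ, M t x = q t + u t * (x - p) := by
    intro t ht x
    obtain ⟨u₀, c₀, h1, hf⟩ := hrig t ht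
    simp only [hudef, hqdef, hf]; ring
  have hu0 : u 0 = 1 := by simp [hudef, h0]
  have hq0 : q 0 = p := by simp [hqdef, h0]
  have habs1 : ‖u 1‖ = 1 := habs 1 h1I
  set γ : ℝ := Complex.arg (u 1) with hγdef
  have huexp : u 1 = Complex.exp ((γ:ℂ) * I) := by
    have h1 := Complex.norm_mul_exp_arg_mul_I (u 1)
    rw [habs1] at h1
    simpa using h1.symm
  have hγ0 : γ ≠ 0 := by
    intro h
    apply hu1
    show u 1 = 1
    rw [huexp, h]
    simp
  have hγpi : |γ| ≤ Real.pi := Complex.abs_arg_le_pi _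
  -- bound on the moving base point
  set δ : ℝ → ℂ := fun t => (p - q t) / v with hδdef
  have hδc : ContinuousOn δ (Icc (0:ℝ) 1) := (continuousOn_const.sub hqc).div_const v
  obtain ⟨C₀, hC₀⟩ := (isCompact_Icc : IsCompact (Icc (0:ℝ) 1)).exists_bound_of_continuousOn hδc
  set C : ℝ := max C₀ 0 with hCdef
  have hC : ∀ t ∈ Icc (0:ℝ) 1, ‖δ t‖ ≤ C := by
    intro t ht
    have := hC₀ t ht
    exact le_trans this (le_max_left _ _)
  have hC0 : (0:ℝ) ≤ C := le_max_right _ _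
  have hδ0 : δ 0 = 0 := by simp [hδdef, hq0]
  set sγ : ℝ := Real.sin (|γ| / 2) with hsdef
  have hγpos : 0 < |γ| := abs_pos.2 hγ0
  have hsγ : 0 < sγ := by
    apply Real.sin_pos_of_pos_of_lt_pi (by positivity)
    nlinarith [Real.pi_pos]
  have hsγ1 : sγ ≤ 1 := Real.sin_le_one _
  set R : ℝ := (4*C + 8) * (1 + 1/sγ) with hRdef
  have hRpos : 0 < R := by positivity
  set e : ℂ := Complex.exp (((γ/2 : ℝ) : ℂ) * I) with hedef
  have habse : ‖e‖ = 1 := by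
    rw [hedef]; exact Complex.norm_exp_ofReal_mul_I _
  -- THE KEY CLAIM
  have key : ∀ r : ℝ, ∀ σ : ℂ, R ≤ r → ‖σ‖ ≤ 1 →
      p + v * ((r:ℂ) * e + σ) ∈ sweep M L ∨
      2 * p - (p + v * ((r:ℂ) * e + σ)) ∈ sweep M L := by
    intro r σ hrR hσ
    by_contra hcon
    push_neg at hcon
    obtain ⟨hz, hz'⟩ := hcon
    set ζ : ℂ := (r:ℂ) * e + σ with hζdef
    have hr1 : 4*C + 8 ≤ r := by
      have h1 : (1:ℝ) ≤ 1 + 1/sγ := by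
        have : 0 < 1/sγ := by positivity
        linarith
      nlinarith
    have hr2 : C + 2 ≤ r * sγ := by
      have h1 : R * sγ ≤ r * sγ := mul_le_mul_of_nonneg_right hrR hsγ.le
      have h2 : R * sγ = (4*C+8) * (sγ + 1) := by
        rw [hRdef]; field_simp
      nlinarith
    have habsζ : r - 1 ≤ ‖ζ‖ := by
      have h1 : ‖(r:ℂ) * e‖ = r := by
        rw [norm_mul, habse, mul_one, Complex.norm_real, Real.norm_eq_abs, _root_.abs_of_nonneg (by linarith)]
      have h2 := abs_add_lower ((r:ℂ) * e) σ
      rw [h1] at h2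
      rw [hζdef]
      linarith
    have hrbig : 0 < r - 1 - C := by linarith
    -- the two relative-position functions
    set w : ℝ → ℂ := fun t => (ζ + δ t) / u t with hwdef
    set w' : ℝ → ℂ := fun t => (-ζ + δ t) / u t with hw'def
    have habsw : ∀ t ∈ Icc (0:ℝ) 1, r - 1 - C ≤ ‖w t‖ := by
      intro t ht
      have h1 := abs_add_lower ζ (δ t)
      have h2 := hC t ht
      simp only [hwdef]
      rw [norm_div, habs t ht, div_one]
      linarith
    have habsw' : ∀ t ∈ Icc (0:ℝ) 1, r - 1 - C ≤ ‖w' t‖ := by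
      intro t ht
      have h1 := abs_add_lower (-ζ) (δ t)
      rw [norm_neg] at h1
      have h2 := hC t ht
      simp only [hw'def]
      rw [norm_div, habs t ht, div_one]
      linarith
    have hwne : ∀ t ∈ Icc (0:ℝ) 1, w t ≠ 0 := by
      intro t ht h
      have := habsw t ht
      rw [h] at this; simp at this; linarith
    have hw'ne : ∀ t ∈ Icc (0:ℝ) 1, w' t ≠ 0 := by
      intro t ht h
      have := habsw' t ht
      rw [h] at this; simp at this; linarith
    -- not covered means w t is never a nonnegative real
    have hzval : ∀ t ∈ Icc (0:ℝ) 1, p + v * ζ - q t = u t * v * w t := by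
      intro t ht
      simp only [hwdef, hδdef]
      field_simp [hune t ht]
      ring
    have hz'val : ∀ t ∈ Icc (0:ℝ) 1, (2*p - (p + v * ζ)) - q t = u t * v * w' t := by
      intro t ht
      simp only [hw'def, hδdef]
      field_simp [hune t ht]
      ring
    have hnoton : ∀ t ∈ Icc (0:ℝ) 1, ¬((w t).im = 0 ∧ 0 ≤ (w t).re) := by
      rintro t ht ⟨him, hre⟩
      apply hz
      refine ⟨t, ht, p + (((w t).re : ℝ) : ℂ) * v, ⟨(w t).re, hre, rfl⟩, ?_⟩
      rw [hform t ht]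
      have hwre : (((w t).re : ℝ) : ℂ) = w t := Complex.ext (by simp) (by simp [him])
      rw [hwre]
      linear_combination -(hzval t ht)
    have hnoton' : ∀ t ∈ Icc (0:ℝ) 1, ¬((w' t).im = 0 ∧ 0 ≤ (w' t).re) := by
      rintro t ht ⟨him, hre⟩
      apply hz'
      refine ⟨t, ht, p + (((w' t).re : ℝ) : ℂ) * v, ⟨(w' t).re, hre, rfl⟩, ?_⟩
      rw [hform t ht]
      have hwre : (((w' t).re : ℝ) : ℂ) = w' t := Complex.ext (by simp) (by simp [him])
      rw [hwre]
      linear_combination -(hz'val t ht)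
    -- slit plane membership
    have hslit : ∀ t ∈ Icc (0:ℝ) 1, -w t ∈ Complex.slitPlane := by
      intro t ht
      rw [Complex.mem_slitPlane_iff]
      by_cases him : (w t).im = 0
      · left
        have hre : (w t).re < 0 := by
          by_contra hre
          exact hnoton t ht ⟨him, not_lt.1 hre⟩
        simp only [Complex.neg_re]
        linarith
      · right
        simp only [Complex.neg_im]
        intro h
        exact him (by linarith [neg_eq_zero.1 h])
    have hslit' : ∀ t ∈ Icc (0:ℝ) 1, -w' t ∈ Complex.slitPlane := by
      intro t ht
      rw [Complex.mem_slitPlane_iff]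
      by_cases him : (w' t).im = 0
      · left
        have hre : (w' t).re < 0 := by
          by_contra hre
          exact hnoton' t ht ⟨him, not_lt.1 hre⟩
        simp only [Complex.neg_re]
        linarith
      · right
        simp only [Complex.neg_im]
        intro h
        exact him (by linarith [neg_eq_zero.1 h])
    -- continuity of w, w'
    have hwc : ContinuousOn w (Icc (0:ℝ) 1) := by
      simp only [hwdef]
      exact (continuousOn_const.add hδc).div huc hune
    have hw'c : ContinuousOn w' (Icc (0:ℝ) 1) := by
      simp only [hw'def]
      exact (continuousOn_const.add hδc).div huc hune
    -- arg functions
    set A : ℝ → ℝ := fun t => Complex.arg (-w t) with hAdef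
    set A' : ℝ → ℝ := fun t => Complex.arg (-w' t) with hA'def
    have hAc : ContinuousOn A (Icc (0:ℝ) 1) := by
      intro t ht
      have h1 : ContinuousWithinAt (fun s => -w s) (Icc (0:ℝ) 1) t := (hwc t ht).neg
      exact ContinuousWithinAt.comp (g := Complex.arg) (f := fun s => -w s) (t := univ)
        ((Complex.continuousAt_arg (hslit t ht)).continuousWithinAt) h1 (mapsTo_univ _ _)
    have hA'c : ContinuousOn A' (Icc (0:ℝ) 1) := by
      intro t ht
      have h1 : ContinuousWithinAt (fun s => -w' s) (Icc (0:ℝ) 1) t := (hw'c t ht).neg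
      exact ContinuousWithinAt.comp (g := Complex.arg) (f := fun s => -w' s) (t := univ)
        ((Complex.continuousAt_arg (hslit' t ht)).continuousWithinAt) h1 (mapsTo_univ _ _)
    -- the ratio
    set ρ : ℝ → ℂ := fun t => w' t / w t with hρdef
    have hρc : ContinuousOn ρ (Icc (0:ℝ) 1) := hw'c.div hwc hwne
    have hρ1 : ∀ t ∈ Icc (0:ℝ) 1, ‖1 + ρ t‖ < 1 := by
      intro t ht
      have hζδne : ζ + δ t ≠ 0 := by
        intro h
        have h3 := abs_add_lower ζ (δ t)
        rw [h] at h3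
        simp at h3
        have := hC t ht
        linarith
      have hnum : 1 + ρ t = (2 * δ t / u t) / w t := by
        simp only [hρdef, hwdef, hw'def]
        field_simp [hune t ht]
        ring
      rw [hnum, norm_div, norm_div, norm_mul, habs t ht, div_one]
      rw [div_lt_one (lt_of_lt_of_le hrbig (habsw t ht))]
      have h3 := hC t ht
      have h4 := habsw t ht
      have h5 : ‖(2:ℂ)‖ = 2 := by norm_num
      rw [h5]
      linarith
    have hρre : ∀ t ∈ Icc (0:ℝ) 1, 0 < (-ρ t).re := by
      intro t ht
      have h1 := hρ1 t ht
      have h2 := Complex.re_le_norm (1 + ρ t)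
      simp only [Complex.add_re, Complex.one_re] at h2
      simp only [Complex.neg_re]
      linarith
    have hρne : ∀ t ∈ Icc (0:ℝ) 1, -ρ t ≠ 0 := by
      intro t ht h
      have := hρre t ht
      rw [h] at this
      simp at this
    set N : ℝ → ℝ := fun t => Complex.arg (-ρ t) with hNdef
    have hNc : ContinuousOn N (Icc (0:ℝ) 1) := by
      intro t ht
      have h1 : ContinuousWithinAt (fun s => -ρ s) (Icc (0:ℝ) 1) t := (hρc t ht).neg
      exact ContinuousWithinAt.comp (g := Complex.arg) (f := fun s => -ρ s) (t := univ)
        ((Complex.continuousAt_arg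
          (Complex.mem_slitPlane_iff.2 (Or.inl (hρre t ht)))).continuousWithinAt) h1
        (mapsTo_univ _ _)
    have hNlt : ∀ t ∈ Icc (0:ℝ) 1, |N t| < Real.pi/2 := fun t ht =>
      Complex.abs_arg_lt_pi_div_two_iff.2 (Or.inl (hρre t ht))
    set E : ℝ → ℝ := fun t => A' t - A t - N t with hEdef
    have hEc : ContinuousOn E (Icc (0:ℝ) 1) := by
      simp only [hEdef]
      exact (hA'c.sub hAc).sub hNc
    -- the key discrete identity
    have hexpE : ∀ t ∈ Icc (0:ℝ) 1, Complex.exp (((E t : ℝ) : ℂ) * I) = -1 := by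
      intro t ht
      have hsplit : ((E t : ℝ) : ℂ) * I
          = ((A' t : ℝ):ℂ) * I + (-(((A t : ℝ):ℂ) * I)) + (-(((N t : ℝ):ℂ) * I)) := by
        simp only [hEdef]; push_cast; ring
      rw [hsplit, Complex.exp_add, Complex.exp_add, Complex.exp_neg, Complex.exp_neg]
      simp only [hAdef, hA'def, hNdef]
      rw [exp_arg_mul_I _ (neg_ne_zero.2 (hw'ne t ht)),
          exp_arg_mul_I _ (neg_ne_zero.2 (hwne t ht)),
          exp_arg_mul_I _ (hρne t ht)]
      have hρt : ρ t = w' t / w t := rfl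
      rw [hρt]
      exact prod_eq_neg_one (w t) (w' t) (hwne t ht) (hw'ne t ht)
    -- E t is an odd multiple of π
    have hEk : ∀ t ∈ Icc (0:ℝ) 1, ∃ k : ℤ, E t = (2*k+1)*Real.pi := by
      intro t ht
      have h1 : Complex.exp (((E t - Real.pi : ℝ) : ℂ) * I) = 1 := by
        have hh : ((E t - Real.pi : ℝ) : ℂ) * I = ((E t : ℝ) : ℂ)*I - (Real.pi : ℂ)*I := by
          push_cast; ring
        rw [hh, Complex.exp_sub, hexpE t ht, Complex.exp_pi_mul_I]
        norm_num
      rw [Complex.exp_eq_one_iff] at h1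
      obtain ⟨n, hn⟩ := h1
      refine ⟨n, ?_⟩
      have h2 : ((E t - Real.pi : ℝ) : ℂ) = (n : ℂ) * (2 * (Real.pi:ℂ)) := by
        apply mul_right_cancel₀ Complex.I_ne_zero
        linear_combination hn
      have h3 : E t - Real.pi = (n:ℝ) * (2*Real.pi) := by exact_mod_cast h2
      linarith
    have hIcc01 : uIcc (0:ℝ) 1 = Icc (0:ℝ) 1 := uIcc_of_le zero_le_one
    obtain ⟨k0, hk0⟩ := hEk 0 h0I
    obtain ⟨k1, hk1⟩ := hEk 1 h1I
    -- E is "constant" (same odd multiple)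
    have hE01 : E 1 = E 0 := by
      rcases lt_trichotomy k0 k1 with hlt | heq | hgt
      · exfalso
        have hk0k1 : (k0:ℝ) + 1 ≤ k1 := by exact_mod_cast hlt
        have hc : ((2*(k0:ℝ)+2)*Real.pi : ℝ) ∈ uIcc (E 0) (E 1) := by
          rw [mem_uIcc]
          left
          constructor
          · rw [hk0]; nlinarith [Real.pi_pos]
          · rw [hk1]; nlinarith [Real.pi_pos]
        obtain ⟨t₂, ht₂, hEt₂⟩ := intermediate_value_uIcc (by rw [hIcc01]; exact hEc) hc
        rw [hIcc01] at ht₂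
        obtain ⟨k₂, hk₂⟩ := hEk t₂ ht₂
        rw [hk₂] at hEt₂
        have h4 : (2*(k₂:ℝ)+1) = 2*(k0:ℝ)+2 := mul_right_cancel₀ Real.pi_ne_zero hEt₂
        have h5 : 2*k₂+1 = 2*k0+2 := by exact_mod_cast h4
        omega
      · rw [hk0, hk1, heq]
      · exfalso
        have hk0k1 : (k1:ℝ) + 1 ≤ k0 := by exact_mod_cast hgt
        have hc : ((2*(k1:ℝ)+2)*Real.pi : ℝ) ∈ uIcc (E 0) (E 1) := by
          rw [mem_uIcc]
          right
          constructor
          · rw [hk1]; nlinarith [Real.pi_pos]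
          · rw [hk0]; nlinarith [Real.pi_pos]
        obtain ⟨t₂, ht₂, hEt₂⟩ := intermediate_value_uIcc (by rw [hIcc01]; exact hEc) hc
        rw [hIcc01] at ht₂
        obtain ⟨k₂, hk₂⟩ := hEk t₂ ht₂
        rw [hk₂] at hEt₂
        have h4 : (2*(k₂:ℝ)+1) = 2*(k1:ℝ)+2 := mul_right_cancel₀ Real.pi_ne_zero hEt₂
        have h5 : 2*k₂+1 = 2*k1+2 := by exact_mod_cast h4
        omega
    -- value at 0
    have hw0 : w 0 = ζ := by simp [hwdef, hδ0, hu0]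
    have hw'0 : w' 0 = -ζ := by simp [hw'def, hδ0, hu0]
    have hζne : ζ ≠ 0 := by
      intro h
      rw [h] at habsζ
      simp at habsζ
      linarith
    have hρ0 : ρ 0 = -1 := by
      simp only [hρdef, hw0, hw'0]
      field_simp
    have hE0 : E 0 = Complex.arg ζ - Complex.arg (-ζ) := by
      simp only [hEdef, hA'def, hAdef, hNdef, hw0, hw'0, hρ0, neg_neg, Complex.arg_one]
      ring
    -- values at 1
    have hw1 : w 1 = (ζ + δ 1) * Complex.exp (((-γ : ℝ):ℂ) * I) := by
      simp only [hwdef]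
      rw [huexp, div_eq_mul_inv, ← Complex.exp_neg]
      congr 1
      push_cast; ring
    have hw'1 : w' 1 = (-ζ + δ 1) * Complex.exp (((-γ : ℝ):ℂ) * I) := by
      simp only [hw'def]
      rw [huexp, div_eq_mul_inv, ← Complex.exp_neg]
      congr 1
      push_cast; ring
    have hsplit1 : (ζ + δ 1) * Complex.exp (((-γ:ℝ):ℂ) * I)
        = (r:ℂ) * Complex.exp (((-(γ/2) : ℝ):ℂ) * I) + (σ + δ 1) * Complex.exp (((-γ:ℝ):ℂ) * I) := by
      simp only [hζdef, hedef]
      rw [add_mul, add_mul, mul_assoc, ← Complex.exp_add]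
      have : ((γ/2 : ℝ):ℂ) * I + ((-γ:ℝ):ℂ) * I = ((-(γ/2) : ℝ):ℂ) * I := by
        push_cast; ring
      rw [this]
      ring
    have hsplit1' : (-ζ + δ 1) * Complex.exp (((-γ:ℝ):ℂ) * I)
        = -((r:ℂ) * Complex.exp (((-(γ/2) : ℝ):ℂ) * I)) + (δ 1 - σ) * Complex.exp (((-γ:ℝ):ℂ) * I) := by
      simp only [hζdef, hedef]
      have h2 : ((γ/2 : ℝ):ℂ) * I + ((-γ:ℝ):ℂ) * I = ((-(γ/2) : ℝ):ℂ) * I := by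
        push_cast; ring
      rw [← h2, Complex.exp_add]
      ring
    have him1 : (w 1).im = -(r * Real.sin (γ/2)) + ((σ + δ 1) * Complex.exp (((-γ:ℝ):ℂ) * I)).im := by
      rw [hw1, hsplit1]
      simp only [Complex.add_im, Complex.mul_im, Complex.ofReal_re, Complex.ofReal_im,
        Complex.exp_ofReal_mul_I_im, Real.sin_neg]
      ring
    have him1' : (w' 1).im = r * Real.sin (γ/2) + ((δ 1 - σ) * Complex.exp (((-γ:ℝ):ℂ) * I)).im := by
      rw [hw'1, hsplit1']
      simp only [Complex.add_im, Complex.neg_im, Complex.mul_im, Complex.ofReal_re,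
        Complex.ofReal_im, Complex.exp_ofReal_mul_I_im, Real.sin_neg]
      ring
    have hb1 : |((σ + δ 1) * Complex.exp (((-γ:ℝ):ℂ) * I)).im| ≤ 1 + C := by
      calc |((σ + δ 1) * Complex.exp (((-γ:ℝ):ℂ) * I)).im|
          ≤ ‖(σ + δ 1) * Complex.exp (((-γ:ℝ):ℂ) * I)‖ := Complex.abs_im_le_norm _
        _ = ‖σ + δ 1‖ := by rw [norm_mul, Complex.norm_exp_ofReal_mul_I, mul_one]
        _ ≤ ‖σ‖ + ‖δ 1‖ := norm_add_le _ _
        _ ≤ 1 + C := add_le_add hσ (hC 1 h1I)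
    have hb1' : |((δ 1 - σ) * Complex.exp (((-γ:ℝ):ℂ) * I)).im| ≤ 1 + C := by
      calc |((δ 1 - σ) * Complex.exp (((-γ:ℝ):ℂ) * I)).im|
          ≤ ‖(δ 1 - σ) * Complex.exp (((-γ:ℝ):ℂ) * I)‖ := Complex.abs_im_le_norm _
        _ = ‖δ 1 - σ‖ := by rw [norm_mul, Complex.norm_exp_ofReal_mul_I, mul_one]
        _ ≤ ‖δ 1‖ + ‖σ‖ := by
            rw [sub_eq_add_neg]
            calc ‖δ 1 + -σ‖ ≤ ‖δ 1‖ + ‖-σ‖ :=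
                  norm_add_le _ _
              _ = ‖δ 1‖ + ‖σ‖ := by rw [norm_neg]
        _ ≤ 1 + C := by
            have := hC 1 h1I
            linarith
    have hζim : ζ.im = r * Real.sin (γ/2) + σ.im := by
      simp only [hζdef, hedef, Complex.add_im, Complex.mul_im, Complex.ofReal_re,
        Complex.ofReal_im, Complex.exp_ofReal_mul_I_im]
      ring
    have hσim : |σ.im| ≤ 1 := le_trans (Complex.abs_im_le_norm σ) hσ
    have hN1 := hNlt 1 h1I
    have hE1 : E 1 = A' 1 - A 1 - N 1 := rfl
    -- final case analysis on the sign of γ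
    rcases lt_or_gt_of_ne hγ0 with hγneg | hγpos
    · -- γ < 0
      have hγabs : |γ| = -γ := abs_of_neg hγneg
      have hsin : Real.sin (γ/2) = -sγ := by
        rw [hsdef, hγabs, ← Real.sin_neg]
        congr 1
        ring
      have hζimneg : ζ.im < 0 := by
        rw [hζim, hsin]
        nlinarith [(abs_le.1 hσim).2, hr2, hC0]
      have hE0v : E 0 = -Real.pi := by
        rw [hE0, Complex.arg_neg_eq_arg_add_pi_of_im_neg hζimneg]
        ring
      have hA1 : A 1 < 0 := by
        simp only [hAdef]
        rw [Complex.arg_neg_iff]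
        simp only [Complex.neg_im]
        rw [him1, hsin]
        nlinarith [(abs_le.1 hb1).1, hr2, hC0]
      have hA'1 : 0 ≤ A' 1 := by
        simp only [hA'def]
        rw [Complex.arg_nonneg_iff]
        simp only [Complex.neg_im]
        rw [him1', hsin]
        nlinarith [(abs_le.1 hb1').2, hr2, hC0]
      have hEv : E 1 = -Real.pi := by rw [hE01, hE0v]
      rw [hE1] at hEv
      have hN1a := (abs_lt.1 hN1).1
      have hN1b := (abs_lt.1 hN1).2
      linarith [Real.pi_pos]
    · -- γ > 0
      have hγabs : |γ| = γ := abs_of_pos hγpos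
      have hsin : Real.sin (γ/2) = sγ := by rw [hsdef, hγabs]
      have hζimpos : 0 < ζ.im := by
        rw [hζim, hsin]
        nlinarith [(abs_le.1 hσim).1, hr2, hC0]
      have hE0v : E 0 = Real.pi := by
        rw [hE0, Complex.arg_neg_eq_arg_sub_pi_of_im_pos hζimpos]
        ring
      have hA1 : 0 ≤ A 1 := by
        simp only [hAdef]
        rw [Complex.arg_nonneg_iff]
        simp only [Complex.neg_im]
        rw [him1, hsin]
        nlinarith [(abs_le.1 hb1).2, hr2, hC0]
      have hA'1 : A' 1 < 0 := by
        simp only [hA'def]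
        rw [Complex.arg_neg_iff]
        simp only [Complex.neg_im]
        rw [him1', hsin]
        nlinarith [(abs_le.1 hb1').1, hr2, hC0]
      have hEv : E 1 = Real.pi := by rw [hE01, hE0v]
      rw [hE1] at hEv
      have hN1a := (abs_lt.1 hN1).1
      have hN1b := (abs_lt.1 hN1).2
      linarith [Real.pi_pos]
  -- MEASURE PART
  have hvabs : 0 < ‖v‖ := norm_pos_iff.mpr hv
  set cen : ℕ → ℂ := fun k => p + v * (((R + 3*k : ℝ) : ℂ) * e) with hcen
  have hball : ∀ k : ℕ, ball (cen k) (‖v‖) ⊆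
      sweep M L ∪ (fun z => 2*p - z) ⁻¹' sweep M L := by
    intro k z hzb
    set σ : ℂ := (z - cen k) / v with hσdef
    have hσ1 : ‖σ‖ ≤ 1 := by
      rw [hσdef, norm_div, div_le_one hvabs]
      have h1 := mem_ball.1 hzb
      rw [Complex.dist_eq] at h1
      linarith
    have hzeq : z = p + v * (((R + 3*k : ℝ):ℂ) * e + σ) := by
      rw [hσdef, hcen]
      field_simp
      ring
    have hrr : R ≤ R + 3*k := le_add_of_nonneg_right (by positivity)
    rcases key (R + 3*k) σ hrr hσ1 with h | h
    · left; rw [hzeq]; exact h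
    · right
      simp only [mem_preimage]
      rw [hzeq]; exact h
  have hdisj : Pairwise (Function.onFun Disjoint fun k : ℕ => ball (cen k) (‖v‖)) := by
    intro k j hkj
    apply ball_disjoint_ball
    rw [Complex.dist_eq]
    have hsub : cen k - cen j = v * (((3*(k:ℝ) - 3*j : ℝ)):ℂ) * e := by
      rw [hcen]; push_cast; ring
    rw [hsub, norm_mul, norm_mul, habse, Complex.norm_real, Real.norm_eq_abs, mul_one]
    have hone : (1:ℝ) ≤ |(k:ℝ) - (j:ℝ)| := by
      rcases lt_or_gt_of_ne hkj with h | h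
      · have hh : (k:ℝ) + 1 ≤ j := by exact_mod_cast h
        rw [abs_sub_comm, _root_.abs_of_nonneg (by linarith)]; linarith
      · have hh : (j:ℝ) + 1 ≤ k := by exact_mod_cast h
        rw [_root_.abs_of_nonneg (by linarith)]; linarith
    have h3 : (3:ℝ) ≤ |3*(k:ℝ) - 3*(j:ℝ)| := by
      have heq : 3*(k:ℝ) - 3*(j:ℝ) = 3*((k:ℝ) - (j:ℝ)) := by ring
      rw [heq, abs_mul, _root_.abs_of_nonneg (by norm_num : (0:ℝ) ≤ 3)]
      linarith
    nlinarith
  have hvolU : MeasureTheory.volume (⋃ k : ℕ, ball (cen k) (‖v‖)) = ⊤ := by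
    rw [measure_iUnion hdisj (fun k => measurableSet_ball)]
    have hc : ∀ k : ℕ, MeasureTheory.volume (ball (cen k) (‖v‖)) =
        MeasureTheory.volume (ball (0:ℂ) (‖v‖)) :=
      fun k => Measure.addHaar_ball_center volume _ _
    rw [tsum_congr hc]
    exact ENNReal.tsum_const_eq_top_of_ne_zero (measure_ball_pos volume 0 hvabs).ne'
  have hle : (⊤ : ENNReal) ≤ MeasureTheory.volume (sweep M L) +
      MeasureTheory.volume ((fun z => 2*p - z) ⁻¹' sweep M L) := by
    rw [← hvolU]
    exact le_trans (measure_mono (iUnion_subset hball)) (measure_union_le _ _)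
  have hpre : MeasureTheory.volume ((fun z : ℂ => 2*p - z) ⁻¹' sweep M L)
      = MeasureTheory.volume (sweep M L) := by
    have h1 : (fun z : ℂ => 2*p - z) = (fun z : ℂ => 2*p + z) ∘ (fun z : ℂ => -z) := by
      funext z; simp [sub_eq_add_neg]
    rw [h1, preimage_comp, Measure.measure_preimage_neg, measure_preimage_add]
  rw [hpre] at hle
  have htop := top_le_iff.1 hle
  rcases ENNReal.add_eq_top.1 htop with h | h <;> exact h

end HalfLineProof

/-- Half lines do not have property (Kˢ); indeed, a horizontal half line
cannot be moved continuously onto a vertical half line while touching only a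
set of finite area. -/
theorem stmt_17 :
    (∀ p v : ℂ, v ≠ 0 → ¬ HasPropKs {x | ∃ t : ℝ, 0 ≤ t ∧ x = p + (t : ℂ) * v}) ∧
    (∀ M : ℝ → ℂ → ℂ, IsContMovement M → ∀ q w : ℂ, w ≠ 0 → w.re = 0 →
      (M 1) '' {x : ℂ | ∃ t : ℝ, 0 ≤ t ∧ x = (t : ℂ)} =
        {x | ∃ t : ℝ, 0 ≤ t ∧ x = q + (t : ℂ) * w} →
      MeasureTheory.volume (sweep M {x : ℂ | ∃ t : ℝ, 0 ≤ t ∧ x = (t : ℂ)}) = ⊤) := by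
  constructor
  · intro p v hv hKs
    have hα : IsRigidMotion (fun x => Complex.I * x + (p - Complex.I * p)) :=
      ⟨Complex.I, p - Complex.I * p, Complex.norm_I, rfl⟩
    obtain ⟨M, hM, hM1, hvol⟩ := hKs _ hα 1 one_pos
    have hu1 : M 1 1 - M 1 0 ≠ 1 := by
      have hval : M 1 1 - M 1 0 = Complex.I := by
        rw [hM1]
        ring
      rw [hval]
      exact fun h => by simpa using congrArg Complex.im h
    have htop := core M hM p v hv hu1
    rw [htop] at hvol
    exact not_top_lt hvol
  · intro M hM q w hw hwre him
    have h1I : (1:ℝ) ∈ Set.Icc (0:ℝ) 1 := ⟨zero_le_one, le_refl 1⟩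
    have hu1 : M 1 1 - M 1 0 ≠ 1 := by
      intro hcon
      have h0mem : M 1 0 ∈ M 1 '' {x : ℂ | ∃ t : ℝ, 0 ≤ t ∧ x = (t:ℂ)} :=
        ⟨0, ⟨0, le_refl 0, by norm_num⟩, rfl⟩
      have h1mem : M 1 1 ∈ M 1 '' {x : ℂ | ∃ t : ℝ, 0 ≤ t ∧ x = (t:ℂ)} :=
        ⟨1, ⟨1, zero_le_one, by norm_num⟩, rfl⟩
      rw [him] at h0mem h1mem
      obtain ⟨t₀, ht₀, he₀⟩ := h0mem
      obtain ⟨t₁, ht₁, he₁⟩ := h1mem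
      have hsub : ((t₁ : ℂ) - (t₀ : ℂ)) * w = 1 := by
        calc ((t₁:ℂ) - (t₀:ℂ)) * w = (q + (t₁:ℂ)*w) - (q + (t₀:ℂ)*w) := by ring
          _ = M 1 1 - M 1 0 := by rw [← he₀, ← he₁]
          _ = 1 := hcon
      have hre := congrArg Complex.re hsub
      simp only [Complex.mul_re, Complex.sub_re, Complex.sub_im, Complex.ofReal_re,
        Complex.ofReal_im, Complex.one_re, hwre] at hre
      norm_num at hre
    have hset : {x : ℂ | ∃ t : ℝ, 0 ≤ t ∧ x = (t:ℂ)}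
        = {x : ℂ | ∃ s : ℝ, 0 ≤ s ∧ x = 0 + (s:ℂ) * 1} := by
      ext x
      simp
    rw [hset]
    exact core M hM 0 1 one_ne_zero hu1
end
end
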